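/- Let η : ℝ → ℂ be measurable with |η(y)| ≤ M⟨y⟩^{−2} for all y ∈ ℝ, and let 0 < ε < 1. Then there is a constant C (depending only on ε) such that for every Σ ∈ ℝ: sup_{L ≥ 1} L ∫_ℝ ⟨y⟩^ε |η(L(y−Σ))| dy ≤ C M ⟨Σ⟩^ε. -/

import Mathlib

open MeasureTheory

noncomputable section

/-- if `|η(y)| ≤ M⟨y⟩^{−2}` and `0 < ε < 1`, then there is `C = C(ε)` with
`sup_{L ≥ 1} L ∫ ⟨y⟩^ε |η(L(y−Σ))| dy ≤ C M ⟨Σ⟩^ε` for every `Σ ∈ ℝ`.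
Here `⟨y⟩ = (1+y²)^{1/2}`, so `⟨y⟩^{−2} = (1+y²)⁻¹` and `⟨y⟩^ε = (1+y²)^{ε/2}`. -/
theorem stmt_3 (ε : ℝ) (hε0 : 0 < ε) (hε1 : ε < 1) :
    ∃ C : ℝ, 0 < C ∧
      ∀ (η : ℝ → ℂ) (M : ℝ), Measurable η →
        (∀ y : ℝ, ‖η y‖ ≤ M / (1 + y ^ 2)) →
        ∀ Sig : ℝ, ∀ L : ℝ, 1 ≤ L →
          L * (∫ y : ℝ, ((1 + y ^ 2) ^ (ε / 2)) * ‖η (L * (y - Sig))‖) ≤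
            C * M * (1 + Sig ^ 2) ^ (ε / 2) := by
  -- the integrable "tail weight"
  have hr : (Module.finrank ℝ ℝ : ℝ) < 2 - ε := by
    simp [Module.finrank_self]; linarith
  have hInt : Integrable (fun u : ℝ => (1 + u ^ 2) ^ (ε / 2 - 1)) := by
    have := integrable_rpow_neg_one_add_norm_sq (E := ℝ) (μ := volume) hr
    simpa [Real.norm_eq_abs, sq_abs, neg_div, neg_sub, sub_div,
      show -(2 - ε) / 2 = ε / 2 - 1 by ring] using this
  set I : ℝ := ∫ u : ℝ, (1 + u ^ 2) ^ (ε / 2 - 1) with hI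
  have hIpos : 0 < I := by
    rw [hI]
    rw [integral_pos_iff_support_of_nonneg_ae
      (Filter.Eventually.of_forall fun u => Real.rpow_nonneg (by positivity) _) hInt]
    have : Function.support (fun u : ℝ => (1 + u ^ 2) ^ (ε / 2 - 1)) = Set.univ := by
      ext u; simp [Function.mem_support]
      positivity
    rw [this]
    simp
  refine ⟨2 * I, by positivity, ?_⟩
  intro η M hη hbound Sig L hL
  have hL0 : (0 : ℝ) < L := lt_of_lt_of_le one_pos hL
  have hM : 0 ≤ M := le_trans (norm_nonneg (η 0)) (by simpa using hbound 0)
  set G : ℝ → ℝ := fun u => (1 + (Sig + u / L) ^ 2) ^ (ε / 2) * ‖η u‖ with hG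
  have hcomp : ∀ y : ℝ, ((1 + y ^ 2) ^ (ε / 2)) * ‖η (L * (y - Sig))‖
      = G (L * (y - Sig)) := by
    intro y
    have : Sig + L * (y - Sig) / L = y := by field_simp; ring
    simp [hG, this]
  have hchg : (∫ y : ℝ, ((1 + y ^ 2) ^ (ε / 2)) * ‖η (L * (y - Sig))‖)
      = L⁻¹ * ∫ u : ℝ, G u := by
    simp_rw [hcomp]
    have h1 : (∫ y : ℝ, G (L * (y - Sig))) = ∫ y : ℝ, G (L * y) :=
      integral_sub_right_eq_self (fun y => G (L * y)) Sig
    rw [h1, MeasureTheory.Measure.integral_comp_mul_left G L,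
      abs_of_pos (inv_pos.mpr hL0), smul_eq_mul]
  -- pointwise bound on G
  have hptwise : ∀ u : ℝ, G u ≤ (2 * M * (1 + Sig ^ 2) ^ (ε / 2)) * (1 + u ^ 2) ^ (ε / 2 - 1) := by
    intro u
    have hb2 : (u / L) ^ 2 ≤ u ^ 2 := by
      rw [div_pow]
      have hL2 : (1 : ℝ) ≤ L ^ 2 := one_le_pow₀ hL
      calc u ^ 2 / L ^ 2 ≤ u ^ 2 / 1 := by
            apply div_le_div_of_nonneg_left (by positivity) one_pos hL2
        _ = u ^ 2 := by ring
    have hpeetre : 1 + (Sig + u / L) ^ 2 ≤ 2 * (1 + Sig ^ 2) * (1 + u ^ 2) := by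
      nlinarith [sq_nonneg (Sig - u / L), sq_nonneg (Sig * (u / L)), sq_nonneg u, sq_nonneg Sig]
    have hA : (1 + (Sig + u / L) ^ 2) ^ (ε / 2)
        ≤ 2 * ((1 + Sig ^ 2) ^ (ε / 2) * (1 + u ^ 2) ^ (ε / 2)) := by
      have h1 : (1 + (Sig + u / L) ^ 2) ^ (ε / 2)
          ≤ (2 * (1 + Sig ^ 2) * (1 + u ^ 2)) ^ (ε / 2) :=
        Real.rpow_le_rpow (by positivity) hpeetre (by positivity)
      have h2 : (2 * (1 + Sig ^ 2) * (1 + u ^ 2)) ^ (ε / 2)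
          = (2 : ℝ) ^ (ε / 2) * ((1 + Sig ^ 2) ^ (ε / 2) * (1 + u ^ 2) ^ (ε / 2)) := by
        rw [Real.mul_rpow (by positivity) (by positivity),
          Real.mul_rpow (by positivity) (by positivity)]
        ring
      have h3 : (2 : ℝ) ^ (ε / 2) ≤ 2 := by
        calc (2 : ℝ) ^ (ε / 2) ≤ (2 : ℝ) ^ (1 : ℝ) :=
              Real.rpow_le_rpow_left_iff (by norm_num) |>.mpr (by linarith)
          _ = 2 := Real.rpow_one 2
      calc (1 + (Sig + u / L) ^ 2) ^ (ε / 2)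
          ≤ (2 : ℝ) ^ (ε / 2) * ((1 + Sig ^ 2) ^ (ε / 2) * (1 + u ^ 2) ^ (ε / 2)) := by
            rw [← h2]; exact h1
        _ ≤ 2 * ((1 + Sig ^ 2) ^ (ε / 2) * (1 + u ^ 2) ^ (ε / 2)) := by
            apply mul_le_mul_of_nonneg_right h3 (by positivity)
    have hsplit : (1 + u ^ 2) ^ (ε / 2 - 1) = (1 + u ^ 2) ^ (ε / 2) / (1 + u ^ 2) := by
      rw [Real.rpow_sub (by positivity), Real.rpow_one]
    calc G u ≤ (2 * ((1 + Sig ^ 2) ^ (ε / 2) * (1 + u ^ 2) ^ (ε / 2))) * (M / (1 + u ^ 2)) :=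
          mul_le_mul hA (hbound u) (norm_nonneg _) (by positivity)
      _ = (2 * M * (1 + Sig ^ 2) ^ (ε / 2)) * ((1 + u ^ 2) ^ (ε / 2) / (1 + u ^ 2)) := by ring
      _ = (2 * M * (1 + Sig ^ 2) ^ (ε / 2)) * (1 + u ^ 2) ^ (ε / 2 - 1) := by rw [hsplit]
  have hGle : (∫ u : ℝ, G u) ≤ (2 * M * (1 + Sig ^ 2) ^ (ε / 2)) * I := by
    rw [hI, ← integral_const_mul]
    apply integral_mono_of_nonneg
    · exact Filter.Eventually.of_forall fun u => by
        have : (0:ℝ) ≤ G u := mul_nonneg (Real.rpow_nonneg (by positivity) _) (norm_nonneg _)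
        simpa using this
    · exact hInt.const_mul _
    · exact Filter.Eventually.of_forall hptwise
  calc L * (∫ y : ℝ, ((1 + y ^ 2) ^ (ε / 2)) * ‖η (L * (y - Sig))‖)
      = L * (L⁻¹ * ∫ u : ℝ, G u) := by rw [hchg]
    _ = ∫ u : ℝ, G u := by field_simp
    _ ≤ (2 * M * (1 + Sig ^ 2) ^ (ε / 2)) * I := hGle
    _ = 2 * I * M * (1 + Sig ^ 2) ^ (ε / 2) := by ring
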